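/- arXiv:1605.07798 — 3 statements merged into one kernel-verified Lean document; each statement's English description precedes it below -/
import Mathlib

section
/- Any finite set of pairwise independent nonzero elements of an additive poset is linearly independent over ℤ/2ℤ; equivalently, if b_1, ..., b_n are pairwise independent nonzero elements with b_1 + ... + b_n = 0, then n = 0. -/
/-- An additive poset: an abelian group with a partial order satisfying
(∗): `b ≤ a → c ≤ a → b + c ≤ a` and (∗∗): `a ≤ b → a ≤ c → a ≤ a + b + c`. -/
class AdditivePoset (A : Type*) extends AddCommGroup A, PartialOrder A where
  add_le_of_le : ∀ a b c : A, b ≤ a → c ≤ a → b + c ≤ a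
  le_add_add : ∀ a b c : A, a ≤ b → a ≤ c → a ≤ a + b + c

lemma ap_two_torsion {A : Type*} [AdditivePoset A] (a : A) : a + a = 0 := by
  have h1 : a + a ≤ a := AdditivePoset.add_le_of_le a a a le_rfl le_rfl
  have h2 : (a + a) + (a + a) ≤ a + a :=
    AdditivePoset.add_le_of_le (a + a) (a + a) (a + a) le_rfl le_rfl
  have h3 : a + a ≤ (a + a) + a + a := AdditivePoset.le_add_add (a + a) a a h1 h1
  have h4 : (a + a) + a + a = (a + a) + (a + a) := by abel
  rw [h4] at h3
  have h5 : (a + a) + 0 = (a + a) + (a + a) := by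
    rw [add_zero]; exact le_antisymm h3 h2
  exact (add_left_cancel h5).symm

lemma ap_zero_le {A : Type*} [AdditivePoset A] (a : A) : (0 : A) ≤ a := by
  have := AdditivePoset.add_le_of_le a a a le_rfl le_rfl
  rwa [ap_two_torsion a] at this

theorem stmt7 {A : Type*} [AdditivePoset A] (n : ℕ) (b : Fin n → A)
    (hne : ∀ i, b i ≠ 0)
    (hind : ∀ i j, i ≠ j → b i ≤ b i + b j)
    (hsum : ∑ i, b i = 0) : n = 0 := by
  cases n with
  | zero => rfl
  | succ m =>
    exfalso
    have key : ∀ s : Finset (Fin (m + 1)), (0 : Fin (m+1)) ∉ s →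
        b 0 ≤ b 0 + ∑ i ∈ s, b i := by
      intro s
      induction s using Finset.induction_on with
      | empty => simp
      | insert _ _ hj ih =>
        rename_i j s'
        intro h0
        have hj0 : (0 : Fin (m+1)) ∉ s' := fun h => h0 (Finset.mem_insert_of_mem h)
        have hjne : j ≠ 0 := fun h => h0 (h ▸ Finset.mem_insert_self j s')
        have h1 := ih hj0
        have h2 : b 0 ≤ b 0 + b j := hind 0 j (Ne.symm hjne)
        have h3 := AdditivePoset.le_add_add (b 0) _ _ h1 h2
        have heq : b 0 + (b 0 + ∑ i ∈ s', b i) + (b 0 + b j) =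
            b 0 + ∑ i ∈ insert j s', b i := by
          rw [Finset.sum_insert hj]
          have := ap_two_torsion (b 0)
          abel_nf
          have h3b : b 0 + b 0 + b 0 = b 0 := by rw [this, zero_add]
          abel_nf at h3b
          rw [h3b]
        rwa [heq] at h3
    have h0 : b 0 ≤ 0 := by
      have := key (Finset.univ.erase 0) (Finset.notMem_erase 0 _)
      rwa [Finset.add_sum_erase _ _ (Finset.mem_univ 0), hsum] at this
    exact hne 0 (le_antisymm h0 (ap_zero_le _))
end

section
/- Let A be an additive poset and a_0 < a_1 < ... < a_n a strictly increasing chain in A. Then the elements b_i = a_{i-1} + a_i (i = 1,...,n) are pairwise independent nonzero elements, each independent from a_0, and each b_i satisfies b_i ≤ a_i. -/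
/-- In every additive poset, `x + x = 0`. -/
lemma AdditivePoset.two_eq_zero {A : Type*} [AdditivePoset A] (x : A) : x + x = 0 := by
  have h1 : x + x ≤ x := AdditivePoset.add_le_of_le x x x le_rfl le_rfl
  have h2 : x ≤ x + x + x := AdditivePoset.le_add_add x x x le_rfl le_rfl
  have h3 : x + (x + x) ≤ x := AdditivePoset.add_le_of_le x x (x + x) le_rfl h1
  have h3' : x + x + x ≤ x := by
    have e : x + x + x = x + (x + x) := by abel
    rw [e]; exact h3
  have h4 : x = x + x + x := le_antisymm h2 h3'
  have h5 : x + x = (x + x + x) - x := by abel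
  rw [← h4] at h5
  simpa using h5

theorem stmt14 {A : Type*} [AdditivePoset A] (n : ℕ) (c : Fin (n + 1) → A)
    (hc : StrictMono c) :
    (∀ i : Fin n, c i.castSucc + c i.succ ≠ 0) ∧
    (∀ i j : Fin n, i ≠ j →
      c i.castSucc + c i.succ ≤ (c i.castSucc + c i.succ) + (c j.castSucc + c j.succ)) ∧
    (∀ i : Fin n, c 0 ≤ c 0 + (c i.castSucc + c i.succ)) ∧
    (∀ i : Fin n, c i.castSucc + c i.succ ≤ c i.succ) := by
  have hmono := hc.monotone
  have hlt : ∀ i : Fin n, c i.castSucc < c i.succ := fun i => hc (Fin.castSucc_lt_succ : i.castSucc < i.succ)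
  -- b_i ≤ a_i
  have hble : ∀ i : Fin n, c i.castSucc + c i.succ ≤ c i.succ := fun i =>
    AdditivePoset.add_le_of_le _ _ _ (le_of_lt (hlt i)) le_rfl
  refine ⟨?_, ?_, ?_, hble⟩
  · -- nonzero
    intro i h0
    have h2 : c i.castSucc + c i.castSucc = 0 := AdditivePoset.two_eq_zero _
    have : c i.castSucc = c i.succ := by
      have := h0.trans h2.symm
      exact (add_left_cancel this).symm
    exact absurd this (ne_of_lt (hlt i))
  · -- pairwise independence
    intro i j hij
    rcases lt_or_gt_of_ne hij with h | h
    · -- i < j : b_i ≤ a_i ≤ a_{j-1} ≤ a_j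
      have hs : (i.succ : Fin (n + 1)) ≤ j.castSucc := by
        simp only [Fin.le_def, Fin.coe_castSucc, Fin.val_succ]
        omega
      have h1 : c i.castSucc + c i.succ ≤ c j.castSucc := (hble i).trans (hmono hs)
      have h2 : c i.castSucc + c i.succ ≤ c j.succ := h1.trans (le_of_lt (hlt j))
      have h3 := AdditivePoset.le_add_add _ _ _ h1 h2
      calc c i.castSucc + c i.succ
          ≤ c i.castSucc + c i.succ + c j.castSucc + c j.succ := h3
        _ = (c i.castSucc + c i.succ) + (c j.castSucc + c j.succ) := by abel
    · -- j < i
      have hs : (j.succ : Fin (n + 1)) ≤ i.castSucc := by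
        simp only [Fin.le_def, Fin.coe_castSucc, Fin.val_succ]
        omega
      have hjr : c j.castSucc + c j.succ ≤ c i.castSucc :=
        AdditivePoset.add_le_of_le _ _ _ ((le_of_lt (hlt j)).trans (hmono hs)) (hmono hs)
      have hjs : c j.castSucc + c j.succ ≤ c i.succ := hjr.trans (le_of_lt (hlt i))
      have h3 : c j.castSucc + c j.succ ≤
          c j.castSucc + c j.succ + c i.castSucc + c i.succ :=
        AdditivePoset.le_add_add _ _ _ hjr hjs
      have h4 : (c j.castSucc + c j.succ + c i.castSucc + c i.succ) +
            (c j.castSucc + c j.succ) ≤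
            c j.castSucc + c j.succ + c i.castSucc + c i.succ :=
        AdditivePoset.add_le_of_le _ _ _ le_rfl h3
      have t : (c j.castSucc + c j.succ) + (c j.castSucc + c j.succ) = 0 :=
        AdditivePoset.two_eq_zero _
      have e : (c j.castSucc + c j.succ + c i.castSucc + c i.succ) +
            (c j.castSucc + c j.succ) =
            ((c j.castSucc + c j.succ) + (c j.castSucc + c j.succ)) +
            (c i.castSucc + c i.succ) := by abel
      rw [t, zero_add] at e
      rw [e] at h4
      calc c i.castSucc + c i.succ
          ≤ c j.castSucc + c j.succ + c i.castSucc + c i.succ := h4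
        _ = (c i.castSucc + c i.succ) + (c j.castSucc + c j.succ) := by abel
  · -- independence from a_0
    intro i
    have h1 : c 0 ≤ c i.castSucc := hmono (Fin.zero_le _)
    have h2 : c 0 ≤ c i.succ := h1.trans (le_of_lt (hlt i))
    have h3 := AdditivePoset.le_add_add _ _ _ h1 h2
    calc c 0 ≤ c 0 + c i.castSucc + c i.succ := h3
      _ = c 0 + (c i.castSucc + c i.succ) := by rw [add_assoc]
end

section
/- Every nonzero element a of a finite additive poset A can be written as a sum of pairwise independent atoms of A; moreover, every atom appearing in any such expansion of a lies in the tail of a (i.e., is ≤ a). -/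
/-- An atom of an additive poset: a nonzero element whose tail is `{0, a}`. -/
def AdditivePoset.IsAtom' {A : Type*} [AdditivePoset A] (a : A) : Prop :=
  a ≠ 0 ∧ ∀ b : A, b ≤ a → b = 0 ∨ b = a

namespace AdditivePosetAux

open AdditivePoset

variable {A : Type*} [AdditivePoset A]

lemma char2 (x : A) : x + x = 0 := by
  have h1 : x + x ≤ x := add_le_of_le x x x le_rfl le_rfl
  have h2 : x + x + x ≤ x := add_le_of_le x (x + x) x h1 le_rfl
  have h3 : x ≤ x + x + x := le_add_add x x x le_rfl le_rfl
  have h4 : x = x + x + x := le_antisymm h3 h2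
  have h5 : x + (x + x) = x + 0 := by rw [← add_assoc, ← h4, add_zero]
  exact add_left_cancel h5

lemma cancel (x y : A) : x + (x + y) = y := by
  rw [← add_assoc, char2, zero_add]

lemma triple (x u v : A) : x + (x + u) + (x + v) = x + (v + u) := by
  have h : x + (x + u) + (x + v) = (x + x) + (x + (v + u)) := by abel
  rw [h, char2, zero_add]

/-- If `x ≤ x + y` then `y ≤ x + y`. -/
lemma sym {x y : A} (h : x ≤ x + y) : y ≤ x + y := by
  have h2 : x + (x + y) ≤ x + y := add_le_of_le (x + y) x (x + y) h le_rfl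
  rwa [cancel] at h2

/-- Independence is symmetric. -/
lemma indep_symm {x y : A} (h : x ≤ x + y) : y ≤ y + x := by
  rw [add_comm]; exact sym h

/-- Key downward lemma: if `b` is independent of `c` and `e ≤ c`, then `e` is
independent of `b`. -/
lemma down {b c e : A} (hb : b ≤ b + c) (he : e ≤ c) : e ≤ e + b := by
  have hc : c ≤ b + c := sym hb
  have h1 : e ≤ b + c := le_trans he hc
  have h2 : e ≤ e + c + (b + c) := le_add_add e c (b + c) he h1
  have h3 : e + c + (b + c) = e + b := by
    have h : e + c + (b + c) = (e + b) + (c + c) := by abel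
    rw [h, char2, add_zero]
  rwa [h3] at h2

/-- Part 2 core: each summand of a pairwise independent family is below the sum. -/
lemma le_sum {n : ℕ} (b : Fin n → A)
    (hind : ∀ i j, i ≠ j → b i ≤ b i + b j) (i : Fin n) :
    b i ≤ ∑ j, b j := by
  classical
  have key : ∀ S : Finset (Fin n), i ∉ S → b i ≤ b i + ∑ j ∈ S, b j := by
    intro S
    induction S using Finset.induction_on with
    | empty => intro _; simp
    | @insert k S hk ih =>
      intro hiS
      have hik : i ≠ k := fun h => hiS (h ▸ Finset.mem_insert_self k S)
      have h1 : b i ≤ b i + ∑ j ∈ S, b j :=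
        ih (fun h => hiS (Finset.mem_insert_of_mem h))
      have h2 : b i ≤ b i + b k := hind i k hik
      have h3 := le_add_add (b i) (b i + ∑ j ∈ S, b j) (b i + b k) h1 h2
      have h4 : b i + (b i + ∑ j ∈ S, b j) + (b i + b k)
          = b i + ∑ j ∈ insert k S, b j := by
        rw [triple, Finset.sum_insert hk]
      rwa [h4] at h3
  have h := key (Finset.univ.erase i) (Finset.notMem_erase i _)
  rwa [Finset.add_sum_erase _ _ (Finset.mem_univ i)] at h

lemma exists_atom_le [Fintype A] (a : A) (ha : a ≠ 0) :
    ∃ b : A, IsAtom' b ∧ b ≤ a := by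
  classical
  set S : Finset A := Finset.univ.filter (fun x => x ≠ 0 ∧ x ≤ a) with hSdef
  have hS : S.Nonempty := ⟨a, by simp [hSdef, ha]⟩
  obtain ⟨b, hbS, hmin⟩ := S.exists_minimal hS
  have hb : b ≠ 0 ∧ b ≤ a := by simpa [hSdef] using hbS
  refine ⟨b, ⟨hb.1, ?_⟩, hb.2⟩
  intro y hy
  by_contra hcon
  push_neg at hcon
  obtain ⟨hy0, hyb⟩ := hcon
  have hyS : y ∈ S := by
    simp only [hSdef, Finset.mem_filter, Finset.mem_univ, true_and]
    exact ⟨hy0, le_trans hy hb.2⟩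
  exact hyb (le_antisymm hy (hmin hyS hy))

open scoped Classical in
lemma exists_expansion [Fintype A] :
    ∀ (N : ℕ) (a : A), (Finset.univ.filter (fun x => x ≤ a)).card ≤ N → a ≠ 0 →
    ∃ (n : ℕ) (b : Fin n → A), (∀ i, IsAtom' (b i)) ∧
      (∀ i j, i ≠ j → b i ≤ b i + b j) ∧ ∑ i, b i = a := by
  classical
  intro N
  induction N with
  | zero =>
    intro a hcard _
    exfalso
    have : a ∈ Finset.univ.filter (fun x => x ≤ a) := by simp
    have := Finset.card_pos.mpr ⟨a, this⟩
    omega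
  | succ N ih =>
    intro a hcard ha
    obtain ⟨b, hbatom, hba⟩ := exists_atom_le a ha
    by_cases hab : a = b
    · refine ⟨1, fun _ => b, fun _ => hbatom, ?_, ?_⟩
      · intro i j hij; exact absurd (Subsingleton.elim i j) hij
      · simpa using hab.symm
    · set c : A := a + b with hcdef
      have hc0 : c ≠ 0 := by
        rw [hcdef]
        intro h
        apply hab
        calc a = a + (b + b) := by rw [char2, add_zero]
          _ = (a + b) + b := by rw [add_assoc]
          _ = b := by rw [h, zero_add]
      have hca : c ≤ a := add_le_of_le a a b le_rfl hba
      have hbc : b + c = a := by rw [hcdef, add_comm a b, cancel]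
      -- strict inclusion of tails
      have hsub : (Finset.univ.filter (fun x => x ≤ c)) ⊂
          (Finset.univ.filter (fun x => x ≤ a)) := by
        constructor
        · intro x hx
          simp only [Finset.mem_filter, Finset.mem_univ, true_and] at hx ⊢
          exact le_trans hx hca
        · intro hsup
          have : a ∈ Finset.univ.filter (fun x => x ≤ c) := hsup (by simp)
          simp only [Finset.mem_filter, Finset.mem_univ, true_and] at this
          have : a = c := le_antisymm this hca
          apply hbatom.1
          have h2 : a + b = a + 0 := by rw [add_zero, ← hcdef]; exact this.symm
          exact add_left_cancel h2
      have hcardc : (Finset.univ.filter (fun x => x ≤ c)).card ≤ N := by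
        have := Finset.card_lt_card hsub
        omega
      obtain ⟨k, e, heatom, heind, hesum⟩ := ih c hcardc hc0
      -- each e i ≤ c
      have helec : ∀ i, e i ≤ c := fun i => hesum ▸ le_sum e heind i
      have hbindc : b ≤ b + c := hbc ▸ hba
      have hbe : ∀ i, b ≤ b + e i := fun i => indep_symm (down hbindc (helec i))
      have heb : ∀ i, e i ≤ e i + b := fun i => down hbindc (helec i)
      refine ⟨k + 1, Fin.cons b e, ?_, ?_, ?_⟩
      · intro i
        refine Fin.cases ?_ ?_ i
        · simpa using hbatom
        · intro j; simpa using heatom j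
      · intro i j hij
        induction i using Fin.cases with
        | zero =>
          induction j using Fin.cases with
          | zero => exact absurd rfl hij
          | succ j' => simpa using hbe j'
        | succ i' =>
          induction j using Fin.cases with
          | zero => simpa using heb i'
          | succ j' =>
            have hij' : i' ≠ j' := fun h => hij (by rw [h])
            simpa using heind i' j' hij'
      · rw [Fin.sum_cons, hesum, hbc]

end AdditivePosetAux

theorem stmt18 {A : Type*} [AdditivePoset A] [Fintype A] (a : A) (ha : a ≠ 0) :
    (∃ (n : ℕ) (b : Fin n → A), (∀ i, AdditivePoset.IsAtom' (b i)) ∧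
      (∀ i j, i ≠ j → b i ≤ b i + b j) ∧ ∑ i, b i = a) ∧
    (∀ (n : ℕ) (b : Fin n → A), (∀ i, AdditivePoset.IsAtom' (b i)) →
      (∀ i j, i ≠ j → b i ≤ b i + b j) → ∑ i, b i = a → ∀ i, b i ≤ a) := by
  constructor
  · exact AdditivePosetAux.exists_expansion _ a le_rfl ha
  · intro n b _ hind hsum i
    exact hsum ▸ AdditivePosetAux.le_sum b hind i
end
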